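/- For a unital qubit channel Φ with diagonal representation (λ₁,λ₂,λ₃) (i.e., Φ(½(1 + w⃗·σ⃗)) = ½(1 + Σ_j λ_j w_j σ_j)), the operator Ω(Φ,2) = Φ̂⊗Φ̂(S) = ½[𝟙⊗𝟙 + Σ_{j=1}^3 λ_j² σ_j⊗σ_j], and its eigenvalues are ½[1+λ₃² ± (λ₁²−λ₂²)] with Bell-state eigenvectors (|00⟩±|11⟩)/√2 and ½[1−λ₃² ± (λ₁²+λ₂²)] with Bell-state eigenvectors (|01⟩±|10⟩)/√2. -/

import Mathlib

open Matrix Kronecker BigOperators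

/-- The Pauli matrices `σ₁, σ₂, σ₃`. -/
noncomputable def pauli : Fin 3 → Matrix (Fin 2) (Fin 2) ℂ
  | 0 => !![0, 1; 1, 0]
  | 1 => !![0, -Complex.I; Complex.I, 0]
  | 2 => !![1, 0; 0, -1]

/-- The tensor product `F ⊗ F` of a superoperator `F` with itself, applied to
an operator `M` on `ℋ ⊗ ℋ`, via the expansion of `M` in matrix units. -/
noncomputable def supTensor {n : Type*} [Fintype n] [DecidableEq n]
    (F : Matrix n n ℂ → Matrix n n ℂ) (M : Matrix (n × n) (n × n) ℂ) :
    Matrix (n × n) (n × n) ℂ :=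
  ∑ a, ∑ b, ∑ c, ∑ e, M (a, c) (b, e) •
    (F (Matrix.single a b 1) ⊗ₖ F (Matrix.single c e 1))

/-- The SWAP operator `S(u⊗v) = v⊗u` on `ℂ^d ⊗ ℂ^d`. -/
noncomputable def swapMat (n : Type*) [DecidableEq n] :
    Matrix (n × n) (n × n) ℂ :=
  Matrix.of fun x y => if x.1 = y.2 ∧ x.2 = y.1 then 1 else 0

set_option maxHeartbeats 1600000 in
/-- For a unital qubit channel `Φ` with diagonal representation
`(λ₁,λ₂,λ₃)`, `Ω(Φ,2) = (Φ̂⊗Φ̂)(S) = ½[𝟙⊗𝟙 + Σ_j λ_j² σ_j⊗σ_j]`,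
with Bell state eigenvectors `(|00⟩±|11⟩)/√2` (eigenvalues
`½[1+λ₃² ± (λ₁²−λ₂²)]`) and `(|01⟩±|10⟩)/√2` (eigenvalues
`½[1−λ₃² ± (λ₁²+λ₂²)]`). -/
theorem Omega_unital_qubit (lam : Fin 3 → ℝ)
    (Φhat : Matrix (Fin 2) (Fin 2) ℂ →ₗ[ℂ] Matrix (Fin 2) (Fin 2) ℂ)
    (hunit : Φhat 1 = 1)
    (hdiag : ∀ j, Φhat (pauli j) = (lam j : ℂ) • pauli j) :
    supTensor (fun M => Φhat M) (swapMat (Fin 2)) =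
        (1 / 2 : ℂ) • ((1 : Matrix (Fin 2 × Fin 2) (Fin 2 × Fin 2) ℂ) +
          ∑ j, ((lam j : ℂ) ^ 2) • (pauli j ⊗ₖ pauli j)) ∧
      (supTensor (fun M => Φhat M) (swapMat (Fin 2))).mulVec
          (fun x => (if x = (0, 0) then 1 else if x = (1, 1) then 1 else 0) /
            (Real.sqrt 2 : ℂ)) =
        (((1 + lam 2 ^ 2 + (lam 0 ^ 2 - lam 1 ^ 2)) / 2 : ℝ) : ℂ) •
          (fun x => (if x = (0, 0) then 1 else if x = (1, 1) then 1 else 0) /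
            (Real.sqrt 2 : ℂ)) ∧
      (supTensor (fun M => Φhat M) (swapMat (Fin 2))).mulVec
          (fun x => (if x = (0, 0) then 1 else if x = (1, 1) then -1 else 0) /
            (Real.sqrt 2 : ℂ)) =
        (((1 + lam 2 ^ 2 - (lam 0 ^ 2 - lam 1 ^ 2)) / 2 : ℝ) : ℂ) •
          (fun x => (if x = (0, 0) then 1 else if x = (1, 1) then -1 else 0) /
            (Real.sqrt 2 : ℂ)) ∧
      (supTensor (fun M => Φhat M) (swapMat (Fin 2))).mulVec
          (fun x => (if x = (0, 1) then 1 else if x = (1, 0) then 1 else 0) /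
            (Real.sqrt 2 : ℂ)) =
        (((1 - lam 2 ^ 2 + (lam 0 ^ 2 + lam 1 ^ 2)) / 2 : ℝ) : ℂ) •
          (fun x => (if x = (0, 1) then 1 else if x = (1, 0) then 1 else 0) /
            (Real.sqrt 2 : ℂ)) ∧
      (supTensor (fun M => Φhat M) (swapMat (Fin 2))).mulVec
          (fun x => (if x = (0, 1) then 1 else if x = (1, 0) then -1 else 0) /
            (Real.sqrt 2 : ℂ)) =
        (((1 - lam 2 ^ 2 - (lam 0 ^ 2 + lam 1 ^ 2)) / 2 : ℝ) : ℂ) •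
          (fun x => (if x = (0, 1) then 1 else if x = (1, 0) then -1 else 0) /
            (Real.sqrt 2 : ℂ)) := by
  have h00 : Φhat (Matrix.single 0 0 1) =
      (1/2 : ℂ) • (1 + (lam 2 : ℂ) • pauli 2) := by
    rw [show (Matrix.single (0:Fin 2) (0:Fin 2) (1:ℂ)) =
        (1/2 : ℂ) • (1 + pauli 2) by
      ext i j; fin_cases i <;> fin_cases j <;>
        simp [pauli, Matrix.single, Matrix.one_apply] <;> norm_num]
    rw [_root_.map_smul, map_add, hunit, hdiag]
  have h11 : Φhat (Matrix.single 1 1 1) =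
      (1/2 : ℂ) • (1 + (-(lam 2) : ℂ) • pauli 2) := by
    rw [show (Matrix.single (1:Fin 2) (1:Fin 2) (1:ℂ)) =
        (1/2 : ℂ) • (1 - pauli 2) by
      ext i j; fin_cases i <;> fin_cases j <;>
        simp [pauli, Matrix.single, Matrix.one_apply] <;> norm_num]
    rw [_root_.map_smul, map_sub, hunit, hdiag, sub_eq_add_neg, ← neg_smul]
  have h01 : Φhat (Matrix.single 0 1 1) =
      (1/2 : ℂ) • ((lam 0 : ℂ) • pauli 0 + Complex.I • (lam 1 : ℂ) • pauli 1) := by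
    rw [show (Matrix.single (0:Fin 2) (1:Fin 2) (1:ℂ)) =
        (1/2 : ℂ) • (pauli 0 + Complex.I • pauli 1) by
      ext i j; fin_cases i <;> fin_cases j <;>
        simp [pauli, Matrix.single, Matrix.one_apply] <;> ring_nf]
    rw [_root_.map_smul, map_add, _root_.map_smul, hdiag, hdiag, smul_comm]
  have h10 : Φhat (Matrix.single 1 0 1) =
      (1/2 : ℂ) • ((lam 0 : ℂ) • pauli 0 + (-Complex.I) • (lam 1 : ℂ) • pauli 1) := by
    rw [show (Matrix.single (1:Fin 2) (0:Fin 2) (1:ℂ)) =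
        (1/2 : ℂ) • (pauli 0 - Complex.I • pauli 1) by
      ext i j; fin_cases i <;> fin_cases j <;>
        simp [pauli, Matrix.single, Matrix.one_apply] <;> ring_nf]
    rw [_root_.map_smul, map_sub, _root_.map_smul, hdiag, hdiag, smul_comm,
      sub_eq_add_neg, ← neg_smul]
    module
  have hsup : supTensor (fun M => Φhat M) (swapMat (Fin 2)) =
      Φhat (Matrix.single 0 0 1) ⊗ₖ Φhat (Matrix.single 0 0 1) +
      Φhat (Matrix.single 0 1 1) ⊗ₖ Φhat (Matrix.single 1 0 1) +
      Φhat (Matrix.single 1 0 1) ⊗ₖ Φhat (Matrix.single 0 1 1) +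
      Φhat (Matrix.single 1 1 1) ⊗ₖ Φhat (Matrix.single 1 1 1) := by
    simp [supTensor, swapMat, Fin.sum_univ_two]
    abel
  have key : supTensor (fun M => Φhat M) (swapMat (Fin 2)) =
      (1 / 2 : ℂ) • ((1 : Matrix (Fin 2 × Fin 2) (Fin 2 × Fin 2) ℂ) +
        ∑ j, ((lam j : ℂ) ^ 2) • (pauli j ⊗ₖ pauli j)) := by
    rw [hsup, h00, h01, h10, h11, Fin.sum_univ_three]
    simp only [Matrix.add_kronecker, Matrix.kronecker_add, Matrix.smul_kronecker,
      Matrix.kronecker_smul, Matrix.one_kronecker_one, smul_smul]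
    match_scalars <;> ring_nf <;> simp [Complex.I_sq] <;> ring
  refine ⟨key, ?_, ?_, ?_, ?_⟩ <;>
    · rw [key]
      funext x
      obtain ⟨x1, x2⟩ := x
      fin_cases x1 <;> fin_cases x2 <;>
        simp [Matrix.mulVec, dotProduct, Fintype.sum_prod_type, Fin.sum_univ_two,
          Fin.sum_univ_three, pauli, Matrix.one_apply, Matrix.sum_apply,
          kroneckerMap_apply, Prod.ext_iff, ← add_div, Pi.smul_apply,
          smul_eq_mul] <;>
        push_cast <;> ring
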